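/- The function f(p) = (√(3p) − 1) / (1 − (√3/2)(√(4−3p) − √p)) satisfies f'(p) < 0 for all p ∈ (1/3, 1]; in particular f is strictly decreasing on (1/3, 1] and 0 ≤ f(p) ≤ 1 for all p ∈ (1/3, 1]. -/

import Mathlib

noncomputable def f3 (p : ℝ) : ℝ :=
  (Real.sqrt (3 * p) - 1) /
    (1 - (Real.sqrt 3 / 2) * (Real.sqrt (4 - 3 * p) - Real.sqrt p))

private lemma f3_key_lt {p : ℝ} (hp1 : 1/3 < p) (hp2 : p ≤ 1) :
    Real.sqrt (3*p) + Real.sqrt 3 * Real.sqrt (4 - 3*p) < 4 := by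
  set a := Real.sqrt (3*p) with ha
  set b := Real.sqrt (4 - 3*p) with hb
  set t := Real.sqrt 3 with ht
  have ha2 : a^2 = 3*p := Real.sq_sqrt (by linarith)
  have hb2 : b^2 = 4 - 3*p := Real.sq_sqrt (by linarith)
  have ht2 : t^2 = 3 := Real.sq_sqrt (by norm_num)
  have ha0 : 0 ≤ a := Real.sqrt_nonneg _
  have hb0 : 0 ≤ b := Real.sqrt_nonneg _
  have ht0 : 0 ≤ t := Real.sqrt_nonneg _
  have htab : t * a * b = Real.sqrt (9*p*(4-3*p)) := by
    rw [ha, hb, ht, ← Real.sqrt_mul (by norm_num), ← Real.sqrt_mul (by nlinarith)]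
    ring_nf
  have hlt : t * a * b < 2 + 3*p := by
    rw [htab]
    have h1 : Real.sqrt (9*p*(4-3*p)) < Real.sqrt ((2+3*p)^2) :=
      Real.sqrt_lt_sqrt (by nlinarith) (by nlinarith)
    rwa [Real.sqrt_sq (by linarith)] at h1
  nlinarith [sq_nonneg (a + t*b - 4), sq_nonneg (a + t*b), mul_nonneg ha0 (mul_nonneg ht0 hb0)]

private lemma f3_denom_pos {p : ℝ} (hp1 : 1/3 < p) (hp2 : p ≤ 1) :
    0 < 1 - (Real.sqrt 3 / 2) * (Real.sqrt (4 - 3*p) - Real.sqrt p) := by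
  set b := Real.sqrt (4 - 3*p) with hb
  set c := Real.sqrt p with hc
  set t := Real.sqrt 3 with ht
  have hb2 : b^2 = 4 - 3*p := Real.sq_sqrt (by linarith)
  have ht2 : t^2 = 3 := Real.sq_sqrt (by norm_num)
  have hb0 : 0 ≤ b := Real.sqrt_nonneg _
  have ht0 : 0 ≤ t := Real.sqrt_nonneg _
  have htc : t * c = Real.sqrt (3*p) := by
    rw [ht, hc, ← Real.sqrt_mul (by norm_num)]
  have h1 : (1:ℝ) < t * c := by
    rw [htc, show (1:ℝ) = Real.sqrt 1 by simp]
    exact Real.sqrt_lt_sqrt (by norm_num) (by linarith)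
  have htc2 : (t*c)^2 = 3*p := by
    rw [htc]; exact Real.sq_sqrt (by linarith)
  have h2 : t * b < 2 + t * c := by
    nlinarith [sq_nonneg (t*b - 2 - t*c), sq_nonneg (t*b + 2 + t*c), mul_nonneg ht0 hb0]
  linarith

private lemma f3_hasDerivAt {p : ℝ} (hp1 : 1/3 < p) (hp2 : p ≤ 1) :
    HasDerivAt f3
      ((1/(2*Real.sqrt (3*p)) * 3 *
          (1 - (Real.sqrt 3 / 2) * (Real.sqrt (4 - 3*p) - Real.sqrt p)) -
        (Real.sqrt (3*p) - 1) *
          (-(Real.sqrt 3 / 2 * (1/(2*Real.sqrt (4 - 3*p)) * (-3) - 1/(2*Real.sqrt p))))) /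
        (1 - (Real.sqrt 3 / 2) * (Real.sqrt (4 - 3*p) - Real.sqrt p))^2) p := by
  have hD := f3_denom_pos hp1 hp2
  have hp0 : (0:ℝ) < p := by linarith
  have h3p : (3:ℝ) * p ≠ 0 := by positivity
  have h43p : (4:ℝ) - 3*p ≠ 0 := by nlinarith
  have hs1 : HasDerivAt (fun x : ℝ => Real.sqrt (3*x)) (1/(2*Real.sqrt (3*p)) * 3) p := by
    have h := (Real.hasDerivAt_sqrt h3p).comp p ((hasDerivAt_id p).const_mul 3)
    simpa only [Function.comp_def, mul_one, neg_mul] using h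
  have hs2 : HasDerivAt (fun x : ℝ => Real.sqrt (4 - 3*x)) (1/(2*Real.sqrt (4 - 3*p)) * (-3)) p := by
    have hin : HasDerivAt (fun x : ℝ => 4 - 3*x) (-3 : ℝ) p := by
      simpa using ((hasDerivAt_id p).const_mul 3).const_sub 4
    have h := (Real.hasDerivAt_sqrt h43p).comp p hin
    simpa only [Function.comp_def, mul_one, neg_mul] using h
  have hs3 : HasDerivAt (fun x : ℝ => Real.sqrt x) (1/(2*Real.sqrt p)) p :=
    Real.hasDerivAt_sqrt (ne_of_gt hp0)
  have hN : HasDerivAt (fun x : ℝ => Real.sqrt (3*x) - 1) (1/(2*Real.sqrt (3*p)) * 3) p :=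
    hs1.sub_const 1
  have hDd : HasDerivAt
      (fun x : ℝ => 1 - (Real.sqrt 3 / 2) * (Real.sqrt (4 - 3*x) - Real.sqrt x))
      (-(Real.sqrt 3 / 2 * (1/(2*Real.sqrt (4 - 3*p)) * (-3) - 1/(2*Real.sqrt p)))) p :=
    (((hs2.sub hs3).const_mul (Real.sqrt 3 / 2)).const_sub 1)
  exact hN.div hDd (ne_of_gt hD)

private lemma f3_aux_sign {u v X : ℝ} (hu : 0 < u) (hv : 0 < v) (hv2 : v^2 = 12 - 3*u^2)
    (hX : X = 1/(2*u)*3*(1 - (v-u)/2) - (u-1)*(9/(4*v)+3/(4*u)))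
    (hkey : u + v < 4) : X < 0 := by
  have hu' : u ≠ 0 := ne_of_gt hu
  have hv' : v ≠ 0 := ne_of_gt hv
  have h : X * (4*u*v) = 9*(u+v-4) := by
    rw [hX]; field_simp
    linear_combination (-12) * hv2
  nlinarith [mul_pos hu hv]

private lemma f3_aux_rw {a b c t : ℝ} (ha : a ≠ 0) (hb : b ≠ 0) (hc : c ≠ 0) (ht : t ≠ 0)
    (ht2 : t^2 = 3) (hac : a = t * c) :
    1/(2*a) * 3 * (1 - t/2 * (b - c)) -
      (a - 1) * (-(t/2 * (1/(2*b) * (-3) - 1/(2*c))))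
    = 1/(2*a)*3*(1 - (t*b-a)/2) - (a-1)*(9/(4*(t*b))+3/(4*a)) := by
  field_simp
  linear_combination (12*c*a*(1-a) + 4*t*b*(c - t*c^2)) * ht2 +
    (4*t^2*b*(1-a-t*c)) * hac

private lemma f3_deriv_neg {p : ℝ} (hp1 : 1/3 < p) (hp2 : p ≤ 1) : deriv f3 p < 0 := by
  have hD := f3_denom_pos hp1 hp2
  have hder := f3_hasDerivAt hp1 hp2
  rw [hder.deriv]
  have hp0 : (0:ℝ) < p := by linarith
  set a := Real.sqrt (3*p) with hadef
  set b := Real.sqrt (4 - 3*p) with hbdef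
  set c := Real.sqrt p with hcdef
  set t := Real.sqrt 3 with htdef
  have ha0 : 0 < a := Real.sqrt_pos.2 (by linarith)
  have hb0 : 0 < b := Real.sqrt_pos.2 (by linarith)
  have hc0 : 0 < c := Real.sqrt_pos.2 hp0
  have ht0 : 0 < t := Real.sqrt_pos.2 (by norm_num)
  have ht2 : t^2 = 3 := Real.sq_sqrt (by norm_num)
  have ha2 : a^2 = 3*p := Real.sq_sqrt (by linarith)
  have hb2 : b^2 = 4 - 3*p := Real.sq_sqrt (by linarith)
  have hac : a = t * c := by
    rw [hadef, htdef, hcdef, ← Real.sqrt_mul (by norm_num)]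
  have hnum : 1/(2*a) * 3 * (1 - t/2 * (b - c)) -
      (a - 1) * (-(t/2 * (1/(2*b) * (-3) - 1/(2*c)))) < 0 := by
    rw [f3_aux_rw (ne_of_gt ha0) (ne_of_gt hb0) (ne_of_gt hc0) (ne_of_gt ht0) ht2 hac]
    refine f3_aux_sign ha0 (mul_pos ht0 hb0) ?_ rfl ?_
    · nlinarith
    · exact f3_key_lt hp1 hp2
  exact div_neg_of_neg_of_pos hnum (by positivity)

/-- `f'(p) < 0` on `(1/3, 1]`; in particular `f` is strictly decreasing there and
`0 ≤ f(p) ≤ 1` for all `p ∈ (1/3, 1]`. -/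
theorem f_decreasing :
    (∀ p ∈ Set.Ioc (1 / 3 : ℝ) 1, deriv f3 p < 0) ∧
      StrictAntiOn f3 (Set.Ioc (1 / 3 : ℝ) 1) ∧
      ∀ p ∈ Set.Ioc (1 / 3 : ℝ) 1, 0 ≤ f3 p ∧ f3 p ≤ 1 := by
  have hderiv : ∀ p ∈ Set.Ioc (1 / 3 : ℝ) 1, deriv f3 p < 0 := fun p hp =>
    f3_deriv_neg hp.1 hp.2
  refine ⟨hderiv, ?_, ?_⟩
  · refine strictAntiOn_of_deriv_neg (convex_Ioc _ _) ?_ ?_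
    · intro x hx
      exact ((f3_hasDerivAt hx.1 hx.2).continuousAt).continuousWithinAt
    · intro x hx
      rw [interior_Ioc] at hx
      exact hderiv x ⟨hx.1, le_of_lt hx.2⟩
  · rintro p ⟨hp1, hp2⟩
    have hD := f3_denom_pos hp1 hp2
    have hp0 : (0:ℝ) < p := by linarith
    have ha1 : (1:ℝ) < Real.sqrt (3*p) := by
      rw [show (1:ℝ) = Real.sqrt 1 by simp]
      exact Real.sqrt_lt_sqrt (by norm_num) (by linarith)
    constructor
    · exact div_nonneg (by linarith) (le_of_lt hD)
    · rw [f3, div_le_one hD]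
      have hkey := f3_key_lt hp1 hp2
      have hac : Real.sqrt (3*p) = Real.sqrt 3 * Real.sqrt p := by
        rw [← Real.sqrt_mul (by norm_num)]
      nlinarith [Real.sqrt_nonneg (4 - 3*p), Real.sqrt_nonneg 3]
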